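/- Let β = b_1…b_k be a natural basic word of ω (tower decomposition with fin(b_i) > in(b_{i+1}) for all i). If for some i, in(b_i) ≤ in(b_{i+1}), then in(b_i) ≤ in(b_{i+1}) ≤ fin(b_{i+1}) < fin(b_i), and the word b_1…b_{i−1} b̃_{i+1} b_i b_{i+2}…b_k (where b̃_{i+1} raises each letter of b_{i+1} by 1) is a reduced word of ω obtained from β by a sequence of short and long braid relations. -/

import Mathlib

/-- The adjacent transposition `sᵢ = (i, i+1)` as a permutation of `ℕ`. -/
def sGen (i : ℕ) : Equiv.Perm ℕ := Equiv.swap i (i + 1)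

/-- The permutation represented by a word. -/
def toPerm (w : List ℕ) : Equiv.Perm ℕ := (w.map sGen).prod

/-- A word is reduced (of minimal length among words representing the same permutation). -/
def IsReducedWord (w : List ℕ) : Prop := ∀ v : List ℕ, toPerm v = toPerm w → w.length ≤ v.length

/-- `w` is a reduced word for the permutation `ω`. -/
def IsReducedWordOf (w : List ℕ) (ω : Equiv.Perm ℕ) : Prop :=
  toPerm w = ω ∧ ∀ v : List ℕ, toPerm v = ω → w.length ≤ v.length

/-- The relation `<₁`: `β` is obtained from `α` by swapping two adjacent letters
`x, y` with `y ≥ x + 2` (the smaller letter moves right). -/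
def Rel1 (α β : List ℕ) : Prop :=
  ∃ (p q : List ℕ) (x y : ℕ), x + 2 ≤ y ∧
    α = p ++ x :: y :: q ∧ β = p ++ y :: x :: q

/-- Lexicographic order (non-strict) on words. -/
def LexLe (α β : List ℕ) : Prop := α = β ∨ List.Lex (· < ·) α β

/-- A tower word: a nonempty increasing run of consecutive integers. -/
def IsTowerWord (a : List ℕ) : Prop := a ≠ [] ∧ a.Chain' (fun x y => y = x + 1)

/-- First letter of a tower word. -/
def inn (a : List ℕ) : ℕ := a.headI

/-- Last letter of a tower word. -/
def fin' (a : List ℕ) : ℕ := a.getLastD 0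

/-- `L` is the tower decomposition of `w`: a factorization into maximal tower words. -/
def IsTowerDecomp (w : List ℕ) (L : List (List ℕ)) : Prop :=
  L.flatten = w ∧ (∀ a ∈ L, IsTowerWord a) ∧
    L.Chain' (fun a b => inn b ≠ fin' a + 1)

/-- The relation `<₂`: a directed long-braid move of a tower word past its left neighbour. -/
def Rel2 (α β : List ℕ) : Prop :=
  ∃ (A B : List (List ℕ)) (a b b1 b2 : List ℕ),
    IsTowerDecomp α (A ++ a :: b :: B) ∧
    inn a ≤ inn b ∧ inn b < fin' b ∧ fin' b < fin' a ∧
    IsTowerWord b1 ∧ (b2 = [] ∨ IsTowerWord b2) ∧ b1 ++ b2 = b ∧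
    β = A.flatten ++ (b1.map (· + 1)) ++ a ++ b2 ++ B.flatten

/-- The directed-braid order: reflexive-transitive closure of `<₁ ∪ <₂`. -/
def DBraid : List ℕ → List ℕ → Prop :=
  Relation.ReflTransGen (fun α β => Rel1 α β ∨ Rel2 α β)

/-- The natural word of `ω`: the reduced word whose tower decomposition has
strictly decreasing initial letters. -/
def IsNaturalWordOf (η : List ℕ) (ω : Equiv.Perm ℕ) : Prop :=
  IsReducedWordOf η ω ∧ ∃ L, IsTowerDecomp η L ∧ L.Chain' (fun a b => inn b < inn a)

/-- A natural basic word of `ω`: a reduced word whose tower decomposition satisfies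
`fin(aᵢ) > in(aᵢ₊₁)` for all `i`. -/
def IsNaturalBasicOf (β : List ℕ) (ω : Equiv.Perm ℕ) : Prop :=
  IsReducedWordOf β ω ∧ ∃ L, IsTowerDecomp β L ∧ L.Chain' (fun a b => inn b < fin' a)

/-- One step of the track of a letter `b` through a tower word `a`. -/
def trackStep (a : List ℕ) (b : ℕ) : Option ℕ :=
  if inn a < b ∧ b ≤ fin' a then some (b - 1)
  else if b + 2 ≤ inn a ∨ fin' a + 2 ≤ b then some b
  else none

/-- The track sequence of `b` through a list of tower words. -/
def trackSeq : ℕ → List (List ℕ) → List ℕ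
  | b, [] => [b]
  | b, a :: rest =>
    match trackStep a b with
    | none => [b]
    | some b' => b :: trackSeq b' rest

/-- The tower decomposition of a word, as a function. -/
def towerDecomp : List ℕ → List (List ℕ)
  | [] => []
  | x :: xs =>
    match towerDecomp xs with
    | [] => [[x]]
    | t :: ts => if t.headI = x + 1 then (x :: t) :: ts else [x] :: t :: ts


namespace InsertionAux

/-- Increasing run of consecutive integers starting at `p`, length `n`. -/
def R (p n : ℕ) : List ℕ := List.range' p n

lemma toPerm_append (u v : List ℕ) : toPerm (u ++ v) = toPerm u * toPerm v := by
  simp [toPerm]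

lemma toPerm_cons (x : ℕ) (l : List ℕ) : toPerm (x :: l) = sGen x * toPerm l := by
  simp [toPerm]

lemma toPerm_single (x : ℕ) : toPerm [x] = sGen x := by
  simp [toPerm]

lemma R_succ (p n : ℕ) : R p (n+1) = p :: R (p+1) n := by
  simp [R, List.range'_succ]

lemma R_concat (p n : ℕ) : R p (n+1) = R p n ++ [p+n] := by
  simpa [R] using List.range'_concat (step := 1) (s := p) (n := n)

lemma R_length (p n : ℕ) : (R p n).length = n := by simp [R]

lemma R_add (p n m : ℕ) : R p (n+m) = R p n ++ R (p+n) m := by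
  have := List.range'_append (s := p) (m := n) (n := m) (step := 1)
  simp only [one_mul] at this
  exact this.symm

lemma inn_R (p n : ℕ) : inn (R p (n+1)) = p := by
  rw [R_succ]; rfl

lemma fin'_R (p n : ℕ) : fin' (R p (n+1)) = p + n := by
  show (R p (n+1)).getLastD 0 = p + n
  rw [R_concat]
  exact List.getLastD_concat

lemma toPerm_R_apply (n : ℕ) : ∀ (p x : ℕ),
    toPerm (R p n) x = if p ≤ x ∧ x < p + n then x + 1 else if x = p + n then p else x := by
  induction n with
  | zero =>
      intro p x
      simp only [R, List.range', toPerm, List.map_nil, List.prod_nil, Equiv.Perm.coe_one, id_eq]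
      split_ifs <;> omega
  | succ n ih =>
      intro p x
      rw [R_succ, toPerm_cons, Equiv.Perm.mul_apply, ih (p+1) x]
      simp only [sGen, Equiv.swap_apply_def]
      split_ifs <;> omega

lemma comm_single (p n i : ℕ) (h1 : p ≤ i) (h2 : i + 1 < p + n) :
    toPerm (R p n) * sGen i = sGen (i+1) * toPerm (R p n) := by
  have hci : toPerm (R p n) i = i + 1 := by
    rw [toPerm_R_apply]; split_ifs <;> omega
  have hci1 : toPerm (R p n) (i+1) = i + 2 := by
    rw [toPerm_R_apply]; split_ifs <;> omega
  have hs := Equiv.swap_apply_apply (toPerm (R p n)) i (i+1)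
  rw [hci, hci1] at hs
  have hg : sGen (i+1) = toPerm (R p n) * sGen i * (toPerm (R p n))⁻¹ := by
    simpa [sGen] using hs
  rw [hg]
  simp [mul_assoc]

lemma comm_range (p n q : ℕ) : ∀ m, p ≤ q → q + m + 1 ≤ p + n →
    toPerm (R p n) * toPerm (R q m) = toPerm (R (q+1) m) * toPerm (R p n)
  | 0, _, _ => by simp [R, toPerm, List.range']
  | (m+1), hpq, h => by
      rw [R_concat q m, R_concat (q+1) m, toPerm_append, toPerm_append,
        toPerm_single, toPerm_single]
      have ih := comm_range p n q m hpq (by omega)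
      have e : q + 1 + m = q + m + 1 := by omega
      rw [e, ← mul_assoc, ih, mul_assoc, comm_single p n (q+m) (by omega) (by omega),
        ← mul_assoc]

lemma cancel_top (p n : ℕ) : toPerm (R p (n+1)) * sGen (p+n) = toPerm (R p n) := by
  rw [R_concat, toPerm_append, toPerm_single, mul_assoc]
  simp [sGen, Equiv.swap_mul_self]

lemma map_add_one_R (m : ℕ) : ∀ q, (R q m).map (· + 1) = R (q+1) m := by
  induction m with
  | zero => intro q; simp [R, List.range']
  | succ m ih => intro q; rw [R_succ, List.map_cons, ih, R_succ]

lemma tower_eq_R (a : List ℕ) (h : a.Chain' (fun x y => y = x + 1)) :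
    a = R (inn a) a.length := by
  induction a with
  | nil => simp [R, List.range']
  | cons x xs ih =>
      cases xs with
      | nil => simp [R, List.range', inn]
      | cons y ys =>
          have h1 : y = x + 1 := (List.isChain_cons_cons.mp h).1
          have h2 := ih (List.isChain_cons_cons.mp h).2
          show x :: y :: ys = R (inn (x :: y :: ys)) (ys.length + 1 + 1)
          have hinn : inn (x :: y :: ys) = x := rfl
          rw [hinn, R_succ]
          congr 1
          have : inn (y :: ys) = y := rfl
          rw [this] at h2
          rw [← h1]
          simpa using h2

end InsertionAux

open InsertionAux in
/-- one step of the insertion sort algorithm on a natural basic word. -/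
theorem insertion_sort_step (ω : Equiv.Perm ℕ) (β : List ℕ)
    (hβ : IsReducedWordOf β ω)
    (A B : List (List ℕ)) (a b : List ℕ)
    (hd : IsTowerDecomp β (A ++ a :: b :: B))
    (hnb : (A ++ a :: b :: B).Chain' (fun u v => inn v < fin' u))
    (h1 : inn a ≤ inn b) :
    (inn a ≤ inn b ∧ inn b ≤ fin' b ∧ fin' b < fin' a) ∧
    IsReducedWordOf (A.flatten ++ (b.map (· + 1)) ++ a ++ B.flatten) ω := by
  obtain ⟨hflat, htw, _⟩ := hd
  have hta := htw a (by simp)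
  have htb := htw b (by simp)
  obtain ⟨hane, hach⟩ := hta
  obtain ⟨hbne, hbch⟩ := htb
  obtain ⟨n', hn⟩ : ∃ n', a.length = n' + 1 := ⟨a.length - 1, by cases a <;> simp_all⟩
  obtain ⟨m', hm⟩ : ∃ m', b.length = m' + 1 := ⟨b.length - 1, by cases b <;> simp_all⟩
  set p := inn a with hp
  set q := inn b with hq0
  have ha : a = R p (n'+1) := by rw [← hn]; exact tower_eq_R a hach
  have hb : b = R q (m'+1) := by rw [← hm]; exact tower_eq_R b hbch
  have hfa : fin' a = p + n' := by rw [ha, fin'_R]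
  have hfb : fin' b = q + m' := by rw [hb, fin'_R]
  have hab : inn b < fin' a := by
    have h' := (List.isChain_append.mp hnb).2.1
    exact (List.isChain_cons_cons.mp h').1
  have hq : q < p + n' := by rw [hfa] at hab; exact hab
  have hβeq : β = A.flatten ++ (a ++ b) ++ B.flatten := by
    rw [← hflat]; simp
  have hωeq : toPerm β = ω := hβ.1
  -- fin' b < fin' a, by contradiction
  have hQ : fin' b < fin' a := by
    by_contra hc
    push_neg at hc
    rw [hfa, hfb] at hc
    obtain ⟨k', hk'⟩ := Nat.exists_eq_add_of_lt hq
    set k := k' + 1 with hkdef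
    have hqk : q + k = p + n' := by omega
    obtain ⟨j, hj⟩ : ∃ j, m' + 1 = k + (1 + j) := ⟨m' - k, by omega⟩
    set mid : List ℕ := R (q+1) k ++ R p n' ++ R (p+n'+1) j with hmiddef
    set v : List ℕ := A.flatten ++ mid ++ B.flatten with hv
    have hmid : toPerm (R (q+1) k) * toPerm (R p n') * toPerm (R (p+n'+1) j)
        = toPerm (R p (n'+1)) * toPerm (R q (m'+1)) := by
      have hcb : toPerm (R q (m'+1)) = toPerm (R q k) * (sGen (q+k) * toPerm (R (p+n'+1) j)) := by
        rw [hj, R_add q k (1+j), toPerm_append]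
        congr 1
        rw [show 1 + j = j + 1 from by omega, R_succ, toPerm_cons, hqk]
      have hcomm := comm_range p (n'+1) q k h1 (by omega)
      have hcan := cancel_top p n'
      rw [hcb]
      calc toPerm (R (q+1) k) * toPerm (R p n') * toPerm (R (p+n'+1) j)
          = toPerm (R (q+1) k) * (toPerm (R p (n'+1)) * sGen (p+n')) * toPerm (R (p+n'+1) j) := by
            rw [hcan]
        _ = (toPerm (R (q+1) k) * toPerm (R p (n'+1))) * (sGen (p+n') * toPerm (R (p+n'+1) j)) := by
            simp [mul_assoc]
        _ = (toPerm (R p (n'+1)) * toPerm (R q k)) * (sGen (p+n') * toPerm (R (p+n'+1) j)) := by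
            rw [hcomm]
        _ = toPerm (R p (n'+1)) * (toPerm (R q k) * (sGen (p+n') * toPerm (R (p+n'+1) j))) := by
            simp [mul_assoc]
        _ = toPerm (R p (n'+1)) * (toPerm (R q k) * (sGen (q+k) * toPerm (R (p+n'+1) j))) := by
            rw [hqk]
    have key : ∀ X : Equiv.Perm ℕ,
        toPerm (R (q+1) k) * (toPerm (R p n') * (toPerm (R (p+n'+1) j) * X))
          = toPerm (R p (n'+1)) * (toPerm (R q (m'+1)) * X) := by
      intro X
      simp only [← mul_assoc]
      rw [hmid]
    have hvp : toPerm v = ω := by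
      rw [hv, hmiddef, ← hωeq, hβeq, ha, hb]
      simp only [toPerm_append, mul_assoc]
      congr 1
      exact key (toPerm B.flatten)
    have hlen : v.length + 2 = β.length := by
      rw [hv, hβeq, hmiddef]
      simp only [List.length_append, R_length, hn, hm]
      omega
    have := hβ.2 v hvp
    omega
  refine ⟨⟨h1, ?_, hQ⟩, ?_, ?_⟩
  · rw [hfb]; omega
  · -- permutation equality
    have hbound : q + m' < p + n' := by rw [hfa, hfb] at hQ; exact hQ
    have hmap : b.map (· + 1) = R (q+1) (m'+1) := by
      rw [hb]; exact map_add_one_R (m'+1) q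
    have hcomm := comm_range p (n'+1) q (m'+1) h1 (by omega)
    rw [← hωeq, hβeq, hmap, ha, hb]
    simp only [toPerm_append, mul_assoc]
    congr 1
    rw [← mul_assoc, ← mul_assoc, hcomm]
  · -- minimality
    intro v hv
    have := hβ.2 v hv
    have hlen : (A.flatten ++ (b.map (· + 1)) ++ a ++ B.flatten).length = β.length := by
      rw [hβeq]
      simp only [List.length_append, List.length_map]
      omega
    omega
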